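/- The target state ℓ_t is reachable in the bounded one-counter automaton B (i.e., some run of B ends in state ℓ_t) if and only if the smallest reduced G-map of the UTA A_B assigns an infinite set of atomic constraints to some state. -/
import Mathlib


open Classical

/-- Comparison operator `◁ ∈ {<, ≤}`. -/
inductive Ineq where
  | lt
  | le

def Ineq.holds : Ineq → ℝ → ℝ → Prop
  | .lt, a, b => a < b
  | .le, a, b => a ≤ b

/-- Atomic constraints over a set `X` of clocks. -/
inductive AC (X : Type) where
  | tt
  | ff
  | upper (x : X) (o : Ineq) (c : ℕ)              -- x ◁ c
  | lower (c : ℕ) (o : Ineq) (x : X)              -- c ◁ x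
  | dUpper (x y : X) (o : Ineq) (c : ℕ)           -- x - y ◁ c
  | dLower (c : ℕ) (o : Ineq) (x y : X)           -- c ◁ x - y

/-- A valuation maps clocks to nonnegative reals. -/
abbrev Val (X : Type) := X → NNReal

def AC.sat {X : Type} (v : Val X) : AC X → Prop
  | .tt => True
  | .ff => False
  | .upper x o c => o.holds (v x : ℝ) (c : ℝ)
  | .lower c o x => o.holds (c : ℝ) (v x : ℝ)
  | .dUpper x y o c => o.holds ((v x : ℝ) - (v y : ℝ)) (c : ℝ)
  | .dLower c o x y => o.holds (c : ℝ) ((v x : ℝ) - (v y : ℝ))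

/-- A constraint (guard) is a finite conjunction of atomic constraints. -/
abbrev Guard (X : Type) := List (AC X)

def satG {X : Type} (v : Val X) (g : Guard X) : Prop := ∀ φ ∈ g, AC.sat v φ

/-- The valuation `v + δ`. -/
def delay {X : Type} (v : Val X) (δ : NNReal) : Val X := fun x => v x + δ

/-- `v ⊑_G v'` for a set `G` of atomic constraints. -/
def simS {X : Type} (G : Set (AC X)) (v v' : Val X) : Prop :=
  ∀ δ : NNReal, ∀ φ ∈ G, AC.sat (delay v δ) φ → AC.sat (delay v' δ) φ

/-- `v ⊑_φ v'` for a single constraint `φ` (a conjunction of atomic constraints). -/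
def simC {X : Type} (g : Guard X) (v v' : Val X) : Prop :=
  ∀ δ : NNReal, satG (delay v δ) g → satG (delay v' δ) g

/-- Right-hand side of an atomic update: `x := c` or `x := y + d`. -/
inductive Rhs (X : Type) where
  | const (c : ℕ)
  | clock (y : X) (d : ℤ)

/-- An update assigns a right-hand side to every clock. -/
abbrev Update (X : Type) := X → Rhs X

def Rhs.eval {X : Type} (v : Val X) : Rhs X → ℝ
  | .const c => (c : ℝ)
  | .clock y d => (v y : ℝ) + (d : ℝ)

/-- `up(v) ≥ 0`. -/
def Update.nonneg {X : Type} (up : Update X) (v : Val X) : Prop :=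
  ∀ x, 0 ≤ Rhs.eval v (up x)

/-- The valuation `up(v)` (meaningful when `up.nonneg v`). -/
noncomputable def Update.app {X : Type} (up : Update X) (v : Val X) : Val X :=
  fun x => Real.toNNReal (Rhs.eval v (up x))

/-- `up⁻¹(φ)` for an atomic constraint `φ`: simultaneous substitution of `up_x` for `x`
rewritten to an equivalent atomic constraint (possibly ⊤ or ⊥). -/
noncomputable def upInvA {X : Type} (up : Update X) : AC X → AC X
  | .tt => .tt
  | .ff => .ff
  | .upper x o c =>
      match up x with
      | .const a => if o.holds (a : ℝ) (c : ℝ) then .tt else .ff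
      | .clock y d => if (c : ℤ) - d < 0 then .ff else .upper y o ((c : ℤ) - d).toNat
  | .lower c o x =>
      match up x with
      | .const a => if o.holds (c : ℝ) (a : ℝ) then .tt else .ff
      | .clock y d => if (c : ℤ) - d < 0 then .tt else .lower ((c : ℤ) - d).toNat o y
  | .dUpper x y o c =>
      match up x, up y with
      | .const a, .const b => if o.holds ((a : ℝ) - (b : ℝ)) (c : ℝ) then .tt else .ff
      | .const a, .clock z e =>
          if (a : ℤ) - e - (c : ℤ) < 0 then .tt
          else .lower ((a : ℤ) - e - (c : ℤ)).toNat o z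
      | .clock z e, .const b =>
          if (c : ℤ) + (b : ℤ) - e < 0 then .ff
          else .upper z o ((c : ℤ) + (b : ℤ) - e).toNat
      | .clock z e, .clock w f =>
          if (c : ℤ) - e + f < 0 then .dLower (-((c : ℤ) - e + f)).toNat o w z
          else .dUpper z w o ((c : ℤ) - e + f).toNat
  | .dLower c o x y =>
      match up x, up y with
      | .const a, .const b => if o.holds (c : ℝ) ((a : ℝ) - (b : ℝ)) then .tt else .ff
      | .const a, .clock z e =>
          if (a : ℤ) - e - (c : ℤ) < 0 then .ff
          else .upper z o ((a : ℤ) - e - (c : ℤ)).toNat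
      | .clock z e, .const b =>
          if (c : ℤ) + (b : ℤ) - e < 0 then .tt
          else .lower ((c : ℤ) + (b : ℤ) - e).toNat o z
      | .clock z e, .clock w f =>
          if (c : ℤ) - e + f < 0 then .dUpper w z o (-((c : ℤ) - e + f)).toNat
          else .dLower ((c : ℤ) - e + f).toNat o z w

/-- `up⁻¹` of a conjunction of atomic constraints. -/
noncomputable def upInvC {X : Type} (up : Update X) (g : Guard X) : Guard X :=
  g.map (upInvA up)

/-- The guard `g` contains an upper-bound constraint `x ◁₁ c` on clock `x`. -/
def hasUpperG {X : Type} (g : Guard X) (x : X) : Prop := ∃ o c, AC.upper x o c ∈ g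

/-- The smallest constant of an upper-bound constraint on `x` in `g`. -/
noncomputable def minUpperG {X : Type} (g : Guard X) (x : X) : ℕ :=
  sInf {c | ∃ o, AC.upper x o c ∈ g}

/-- Condition of Case 3 of the table defining `wp`. -/
def case3G {X : Type} (g : Guard X) (x y : X) (d : ℕ) : Prop :=
  (∃ o c, AC.upper x o c ∈ g ∧ c < d) ∨
  (∃ o c, AC.dUpper x y o c ∈ g ∧ c < d) ∨
  (∃ o e, AC.dLower e o x y ∈ g ∧ d < e)

/-- The pre `wp(φ, g, up)` of an atomic constraint under a guard-update pair. -/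
noncomputable def wp {X : Type} (φ : AC X) (g : Guard X) (up : Update X) : AC X :=
  match upInvA up φ with
  | .upper x o d => if hasUpperG g x then .tt else .upper x o d
  | .lower d o x =>
      if hasUpperG g x ∧ minUpperG g x < d then .lower (minUpperG g x) .le x
      else .lower d o x
  | .dUpper x y o d => if case3G g x y d then .tt else .dUpper x y o d
  | .dLower d o x y => if case3G g x y d then .tt else .dLower d o x y
  | ψ => ψ

/-- A transition of an updatable timed automaton. -/
structure UTrans (Q X : Type) where
  src : Q
  guard : Guard X
  update : Update X
  tgt : Q

/-- An updatable timed automaton (UTA). -/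
structure UTA (Q X : Type) where
  init : Q
  trans : List (UTrans Q X)
  acc : Set Q

/-- (Non-reduced) G-map. -/
def IsGMap {Q X : Type} (A : UTA Q X) (G : Q → Set (AC X)) : Prop :=
  ∀ t ∈ A.trans,
    (∀ φ ∈ t.guard, φ ∈ G t.src) ∧
    (∀ x : X, upInvA t.update (AC.lower 0 .le x) ∈ G t.src) ∧
    (∀ φ ∈ G t.tgt, upInvA t.update φ ∈ G t.src)

/-- Reduced G-map. -/
def IsRedGMap {Q X : Type} (A : UTA Q X) (G : Q → Set (AC X)) : Prop :=
  ∀ t ∈ A.trans,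
    (∀ φ ∈ t.guard, φ ∈ G t.src) ∧
    (∀ x : X, wp (AC.lower 0 .le x) t.guard t.update ∈ G t.src) ∧
    (∀ φ ∈ G t.tgt, wp φ t.guard t.update ∈ G t.src)

/-- Pointwise intersection of all G-maps: the smallest G-map. -/
def minGMap {Q X : Type} (A : UTA Q X) : Q → Set (AC X) :=
  fun q => ⋂ G ∈ {G | IsGMap A G}, G q

/-- Pointwise intersection of all reduced G-maps: the smallest reduced G-map. -/
def minRedGMap {Q X : Type} (A : UTA Q X) : Q → Set (AC X) :=
  fun q => ⋂ G ∈ {G | IsRedGMap A G}, G q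

/-- Action transition `(q, v) →t (q', up(v))` of the UTA semantics. -/
def actionStep {Q X : Type} (A : UTA Q X) (t : UTrans Q X) (c c' : Q × Val X) : Prop :=
  t ∈ A.trans ∧ c.1 = t.src ∧ c'.1 = t.tgt ∧ satG c.2 t.guard ∧
  t.update.nonneg c.2 ∧ c'.2 = t.update.app c.2

/-- A simulation on the UTA semantics: a preorder relating only configurations with
the same state, preserved by delays and actions. -/
def IsSimulation {Q X : Type} (A : UTA Q X)
    (R : (Q × Val X) → (Q × Val X) → Prop) : Prop :=
  (∀ p, R p p) ∧
  (∀ p₁ p₂ p₃, R p₁ p₂ → R p₂ p₃ → R p₁ p₃) ∧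
  (∀ p p', R p p' → p.1 = p'.1) ∧
  (∀ q (v v' : Val X) (δ : NNReal), R (q, v) (q, v') → R (q, delay v δ) (q, delay v' δ)) ∧
  (∀ q (v v' : Val X) t p₁, R (q, v) (q, v') → actionStep A t (q, v) p₁ →
      ∃ v₁', actionStep A t (q, v') (p₁.1, v₁') ∧ R p₁ (p₁.1, v₁'))

/-- A run of a UTA: alternating delays and actions from the initial configuration. -/
def IsRun {Q X : Type} (A : UTA Q X) (n : ℕ) (qs : ℕ → Q) (ds : ℕ → NNReal)
    (vs : ℕ → Val X) : Prop :=
  qs 0 = A.init ∧ (∀ x, vs 0 x = 0) ∧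
  ∀ i, i < n → ∃ t, actionStep A t (qs i, delay (vs i) (ds i)) (qs (i + 1), vs (i + 1))

/-- Configurations occurring on some run of the UTA. -/
def ReachCfg {Q X : Type} (A : UTA Q X) (p : Q × Val X) : Prop :=
  ∃ n qs ds vs, IsRun A n qs ds vs ∧ ∃ δ : NNReal, p.1 = qs n ∧ p.2 = delay (vs n) δ

/-- Timed automaton with subtraction: every atomic update is `x := 0` or `x := x - c`. -/
def IsSubtractionTA {Q X : Type} (A : UTA Q X) : Prop :=
  ∀ t ∈ A.trans, ∀ x : X,
    t.update x = Rhs.const 0 ∨ ∃ c : ℕ, t.update x = Rhs.clock x (-(c : ℤ))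

/-- Timed automaton with bounded subtraction with bounds `M`. -/
def IsBoundedSub {Q X : Type} (A : UTA Q X) (M : X → ℕ) : Prop :=
  IsSubtractionTA A ∧
  ∀ q v, ReachCfg A (q, v) → ∀ t ∈ A.trans, t.src = q → satG v t.guard →
    ∀ (x : X) (c : ℕ), 0 < c → t.update x = Rhs.clock x (-(c : ℤ)) → (v x : ℝ) ≤ (M x : ℝ)

/-- Timed automaton with syntactically bounded subtraction. -/
def IsSynBoundedSub {Q X : Type} (A : UTA Q X) : Prop :=
  IsSubtractionTA A ∧
  ∀ t ∈ A.trans, ∀ (x : X) (c : ℕ), 0 < c → t.update x = Rhs.clock x (-(c : ℤ)) →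
    ∃ o c', AC.upper x o c' ∈ t.guard

/-- The constant of an atomic constraint. -/
def AC.cst {X : Type} : AC X → ℕ
  | .tt => 0
  | .ff => 0
  | .upper _ _ c => c
  | .lower c _ _ => c
  | .dUpper _ _ _ c => c
  | .dLower c _ _ _ => c

/-- The constant occurring in the right-hand side of an atomic update. -/
def Rhs.cst {X : Type} : Rhs X → ℕ
  | .const c => c
  | .clock _ d => d.natAbs

/-- Maximum constant occurring in the guards of a UTA. -/
def maxGuardConst {Q X : Type} (A : UTA Q X) : ℕ :=
  (A.trans.map fun t => (t.guard.map AC.cst).foldr max 0).foldr max 0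

/-- Maximum absolute value of a constant occurring in the updates of a UTA. -/
noncomputable def maxUpdateConst {Q X : Type} [Fintype X] (A : UTA Q X) : ℕ :=
  (A.trans.map fun t => Finset.univ.sup fun x => Rhs.cst (t.update x)).foldr max 0

/-- `L(G)(x)`: maximum constant of a lower-bound constraint on `x` in `G` (⊥ = −∞ if none). -/
noncomputable def Lb {X : Type} (G : Set (AC X)) (x : X) : WithBot ℕ∞ :=
  ⨆ c ∈ {c : ℕ | ∃ o, AC.lower c o x ∈ G}, ((c : ℕ∞) : WithBot ℕ∞)

/-- `U(G)(x)`: maximum constant of an upper-bound constraint on `x` in `G` (⊥ = −∞ if none). -/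
noncomputable def Ub {X : Type} (G : Set (AC X)) (x : X) : WithBot ℕ∞ :=
  ⨆ c ∈ {c : ℕ | ∃ o, AC.upper x o c ∈ G}, ((c : ℕ∞) : WithBot ℕ∞)

def AC.isDiag {X : Type} : AC X → Prop
  | .dUpper _ _ _ _ => True
  | .dLower _ _ _ _ => True
  | _ => False

/-- `G^d`: the diagonal constraints of `G`. -/
def diagOf {X : Type} (G : Set (AC X)) : Set (AC X) := {φ ∈ G | φ.isDiag}

def AC.isWeak {X : Type} : AC X → Prop
  | .upper _ o _ => o = .le
  | .lower _ o _ => o = .le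
  | .dUpper _ _ o _ => o = .le
  | .dLower _ o _ _ => o = .le
  | _ => True

/-- All atomic constraints in guards of `A` use the weak inequality `≤`. -/
def weakGuards {Q X : Type} (A : UTA Q X) : Prop :=
  ∀ t ∈ A.trans, ∀ φ ∈ t.guard, φ.isWeak

/-- A context: an atomic constraint with a hole for the constant. -/
inductive Ctx (X : Type) where
  | upper (x : X)      -- x ≤ ·
  | lower (x : X)      -- · ≤ x
  | dUpper (x y : X)   -- x - y ≤ ·
  | dLower (x y : X)   -- · ≤ x - y

def Ctx.fill {X : Type} : Ctx X → ℕ → AC X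
  | .upper x, c => .upper x .le c
  | .lower x, c => .lower c .le x
  | .dUpper x y, c => .dUpper x y .le c
  | .dLower x y, c => .dLower c .le x y

/-- Propagation sequence `(q_i, ctx_i[c_i]) → ⋯ → (q_j, ctx_j[c_j])`. -/
def PropSeq {Q X : Type} (A : UTA Q X) (i j : ℕ) (qs : ℕ → Q) (ctxs : ℕ → Ctx X)
    (cs : ℕ → ℕ) : Prop :=
  ∀ k, i ≤ k → k < j → ∃ t ∈ A.trans, t.src = qs (k + 1) ∧ t.tgt = qs k ∧
    (ctxs (k + 1)).fill (cs (k + 1)) = wp ((ctxs k).fill (cs k)) t.guard t.update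

/-- A bounded one-counter automaton. -/
structure BCA (L : Type) where
  init : L
  bound : ℕ
  trans : List (L × ℤ × L)
  hbound : ∀ d ∈ trans, d.2.1.natAbs ≤ bound

/-- A run of a bounded one-counter automaton. -/
def BCA.IsRun {L : Type} (B : BCA L) (n : ℕ) (ls : ℕ → L) (cs : ℕ → ℤ) : Prop :=
  ls 0 = B.init ∧ cs 0 = 0 ∧ (∀ i, i ≤ n → 0 ≤ cs i ∧ cs i ≤ (B.bound : ℤ)) ∧
  ∀ i, i < n → ∃ p : ℤ, (ls i, p, ls (i + 1)) ∈ B.trans ∧ cs (i + 1) = cs i + p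

/-- The identity update on the two clocks `x = 0` and `y = 1`. -/
def idUp : Update (Fin 2) := fun z => Rhs.clock z 0

/-- The UTA `A_B` built from a bounded one-counter automaton `B` and a target
state `ℓ_t`.  The fresh states `ℓ₀'` and `ℓ_t'` are `Sum.inr false` and
`Sum.inr true`; the clocks are `x = 0` and `y = 1`. -/
def mkAB {L : Type} (B : BCA L) (lt : L) : UTA (L ⊕ Bool) (Fin 2) where
  init := Sum.inl B.init
  acc := ∅
  trans :=
    (B.trans.map fun d =>
      { src := Sum.inl d.2.2
        guard := [AC.upper 0 .le B.bound, AC.upper 1 .le 0]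
        update := fun z => if z = (0 : Fin 2) then Rhs.clock 0 (-d.2.1) else Rhs.clock z 0
        tgt := Sum.inl d.1 }) ++
    [ { src := Sum.inl B.init, guard := [AC.dUpper 0 1 .le 0], update := idUp,
        tgt := Sum.inr false },
      { src := Sum.inr true, guard := [], update := idUp, tgt := Sum.inl lt },
      { src := Sum.inr true, guard := [],
        update := fun z => if z = (1 : Fin 2) then Rhs.clock 1 1 else Rhs.clock z 0,
        tgt := Sum.inr true } ]

/- ===== Auxiliary development ===== -/

section Aux

abbrev Clk := Fin 2

/-- Guard of the counter-simulating transitions. -/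
def gB (b : ℕ) : Guard Clk := [AC.upper 0 .le b, AC.upper 1 .le 0]

/-- Update of the counter-simulating transitions. -/
def upP (p : ℤ) : Update Clk := fun z => if z = (0 : Fin 2) then Rhs.clock 0 (-p) else Rhs.clock z 0

/-- Update of the self-loop at `ℓ_t'`. -/
def upT : Update Clk := fun z => if z = (1 : Fin 2) then Rhs.clock 1 1 else Rhs.clock z 0

lemma upP_zero (p : ℤ) : upP p 0 = Rhs.clock 0 (-p) := by simp [upP]
lemma upP_one (p : ℤ) : upP p 1 = Rhs.clock 1 0 := by simp [upP]
lemma upT_zero : upT 0 = Rhs.clock 0 0 := by simp [upT]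
lemma upT_one : upT 1 = Rhs.clock 1 1 := by simp [upT]
lemma idUp_app (z : Clk) : idUp z = Rhs.clock z 0 := rfl

lemma hasUpperG_gB_zero (b : ℕ) : hasUpperG (gB b) 0 := ⟨.le, b, by simp [gB]⟩
lemma hasUpperG_gB_one (b : ℕ) : hasUpperG (gB b) 1 := ⟨.le, 0, by simp [gB]⟩
lemma hasUpperG_nil (x : Clk) : ¬ hasUpperG ([] : Guard Clk) x := by
  rintro ⟨o, c, h⟩; simp at h
lemma case3G_nil (x y : Clk) (d : ℕ) : ¬ case3G ([] : Guard Clk) x y d := by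
  rintro (⟨o, c, h, _⟩ | ⟨o, c, h, _⟩ | ⟨o, e, h, _⟩) <;> simp at h

lemma minUpperG_gB_zero (b : ℕ) : minUpperG (gB b) 0 = b := by
  have : {c | ∃ o, AC.upper 0 o c ∈ gB b} = {b} := by
    ext c
    simp only [Set.mem_setOf_eq, Set.mem_singleton_iff, gB, List.mem_cons, List.mem_singleton,
      List.not_mem_nil, or_false]
    constructor
    · rintro ⟨o, h | h⟩ <;> simp_all [AC.upper.injEq]
    · rintro rfl; exact ⟨.le, Or.inl rfl⟩
  rw [minUpperG, this, csInf_singleton]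

lemma minUpperG_gB_one (b : ℕ) : minUpperG (gB b) 1 = 0 := by
  have : {c | ∃ o, AC.upper 1 o c ∈ gB b} = {0} := by
    ext c
    simp only [Set.mem_setOf_eq, Set.mem_singleton_iff, gB, List.mem_cons, List.mem_singleton,
      List.not_mem_nil, or_false]
    constructor
    · rintro ⟨o, h | h⟩ <;> simp_all [AC.upper.injEq]
    · rintro rfl; exact ⟨.le, Or.inr rfl⟩
  rw [minUpperG, this, csInf_singleton]

lemma case3G_gB_01 (b : ℕ) (d : ℕ) : case3G (gB b) 0 1 d ↔ b < d := by
  constructor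
  · rintro (⟨o, c, h, hcd⟩ | ⟨o, c, h, hcd⟩ | ⟨o, e, h, hde⟩) <;>
      simp_all [gB, AC.upper.injEq] <;> omega
  · intro h; exact Or.inl ⟨.le, b, by simp [gB], h⟩

lemma case3G_gB_10 (b : ℕ) (d : ℕ) : case3G (gB b) 1 0 d ↔ 0 < d := by
  constructor
  · rintro (⟨o, c, h, hcd⟩ | ⟨o, c, h, hcd⟩ | ⟨o, e, h, hde⟩) <;>
      simp_all [gB, AC.upper.injEq] <;> omega
  · intro h; exact Or.inl ⟨.le, 0, by simp [gB], h⟩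

end Aux

section WpLemmas

lemma upInvA_tt {X : Type} (up : Update X) : upInvA up .tt = .tt := by simp [upInvA]
lemma upInvA_ff {X : Type} (up : Update X) : upInvA up .ff = .ff := by simp [upInvA]

lemma wp_tt {X : Type} (g : Guard X) (up : Update X) : wp .tt g up = .tt := by
  unfold wp; rw [upInvA_tt]
lemma wp_ff {X : Type} (g : Guard X) (up : Update X) : wp .ff g up = .ff := by
  unfold wp; rw [upInvA_ff]

/-- With an empty guard, `wp` is just `up⁻¹`. -/
lemma wp_nil {X : Type} (φ : AC X) (up : Update X) : wp φ [] up = upInvA up φ := by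
  have hU : ∀ x : X, ¬ hasUpperG ([] : Guard X) x := by rintro x ⟨o, c, h⟩; simp at h
  have hC : ∀ (x y : X) (d : ℕ), ¬ case3G ([] : Guard X) x y d := by
    rintro x y d (⟨o, c, h, _⟩ | ⟨o, c, h, _⟩ | ⟨o, e, h, _⟩) <;> simp at h
  unfold wp
  cases h : upInvA up φ with
  | tt => rfl
  | ff => rfl
  | upper x o c => simp only []; rw [if_neg (hU x)]
  | lower c o x => simp only []; rw [if_neg (by rintro ⟨h1, _⟩; exact hU x h1)]
  | dUpper x y o c => simp only []; rw [if_neg (hC x y c)]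
  | dLower c o x y => simp only []; rw [if_neg (hC x y c)]

lemma upInvA_idUp (φ : AC Clk) : upInvA idUp φ = φ := by
  cases φ with
  | tt => simp [upInvA]
  | ff => simp [upInvA]
  | upper x o c =>
      simp only [upInvA, idUp_app]; rw [if_neg (by omega)]; congr 1 <;> omega
  | lower c o x =>
      simp only [upInvA, idUp_app]; rw [if_neg (by omega)]; congr 1 <;> omega
  | dUpper x y o c =>
      simp only [upInvA, idUp_app]; rw [if_neg (by omega)]; congr 1 <;> omega
  | dLower c o x y =>
      simp only [upInvA, idUp_app]; rw [if_neg (by omega)]; congr 1 <;> omega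

lemma wp_nil_idUp (φ : AC Clk) : wp φ [] idUp = φ := by
  rw [wp_nil, upInvA_idUp]

/- upInvA computations for the self-loop update `upT`. -/
lemma upInvA_upT_upper0 (o : Ineq) (c : ℕ) : upInvA upT (.upper 0 o c) = .upper 0 o c := by
  simp only [upInvA, upT_zero]; rw [if_neg (by omega)]; congr 1 <;> omega
lemma upInvA_upT_upper1 (o : Ineq) (c : ℕ) :
    upInvA upT (.upper 1 o c) = if (c:ℤ) - 1 < 0 then .ff else .upper 1 o (c-1) := by
  simp only [upInvA, upT_one]
  by_cases h : (c:ℤ) - 1 < 0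
  · rw [if_pos h, if_pos h]
  · rw [if_neg h, if_neg h]; congr 1 <;> omega
lemma upInvA_upT_lower0 (o : Ineq) (c : ℕ) : upInvA upT (.lower c o 0) = .lower c o 0 := by
  simp only [upInvA, upT_zero]; rw [if_neg (by omega)]; congr 1 <;> omega
lemma upInvA_upT_lower1 (o : Ineq) (c : ℕ) :
    upInvA upT (.lower c o 1) = if (c:ℤ) - 1 < 0 then .tt else .lower (c-1) o 1 := by
  simp only [upInvA, upT_one]
  by_cases h : (c:ℤ) - 1 < 0
  · rw [if_pos h, if_pos h]
  · rw [if_neg h, if_neg h]; congr 1 <;> omega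
lemma upInvA_upT_dUpper01 (o : Ineq) (c : ℕ) :
    upInvA upT (.dUpper 0 1 o c) = .dUpper 0 1 o (c+1) := by
  simp only [upInvA, upT_zero, upT_one]; rw [if_neg (by omega)]; congr 1 <;> omega

lemma wp_upT_dUpper01 (o : Ineq) (c : ℕ) :
    wp (.dUpper 0 1 o c) [] upT = .dUpper 0 1 o (c+1) := by
  rw [wp_nil, upInvA_upT_dUpper01]

/- wp computations for the counter transitions: guard `gB b`, update `upP p`. -/
lemma wpP_upper0 (b : ℕ) (p : ℤ) (o : Ineq) (c : ℕ) :
    wp (.upper 0 o c) (gB b) (upP p) = if (c:ℤ) + p < 0 then .ff else .tt := by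
  have hinv : upInvA (upP p) (.upper 0 o c)
      = if (c:ℤ) - -p < 0 then .ff else .upper 0 o ((c:ℤ) - -p).toNat := by
    simp only [upInvA, upP_zero]
  by_cases h : (c:ℤ) + p < 0
  · rw [if_pos h]; unfold wp; rw [hinv, if_pos (by omega)]
  · rw [if_neg h]
    unfold wp; rw [hinv, if_neg (by omega)]
    simp only []; rw [if_pos (hasUpperG_gB_zero b)]

lemma wpP_upper1 (b : ℕ) (p : ℤ) (o : Ineq) (c : ℕ) :
    wp (.upper 1 o c) (gB b) (upP p) = .tt := by
  have hinv : upInvA (upP p) (.upper 1 o c) = .upper 1 o c := by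
    simp only [upInvA, upP_one]; rw [if_neg (by omega)]; congr 1 <;> omega
  unfold wp; rw [hinv]; simp only []; rw [if_pos (hasUpperG_gB_one b)]

lemma wpP_lower0 (b : ℕ) (p : ℤ) (o : Ineq) (c : ℕ) :
    wp (.lower c o 0) (gB b) (upP p) =
      if (c:ℤ) + p < 0 then .tt
      else if b < ((c:ℤ)+p).toNat then .lower b .le 0 else .lower ((c:ℤ)+p).toNat o 0 := by
  have harg : (c:ℤ) - -p = (c:ℤ) + p := by omega
  by_cases h : (c:ℤ) + p < 0
  · have hinv : upInvA (upP p) (.lower c o 0) = .tt := by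
      simp only [upInvA, upP_zero]; rw [if_pos (by omega)]
    rw [if_pos h]; unfold wp; rw [hinv]
  · have hinv : upInvA (upP p) (.lower c o 0) = .lower ((c:ℤ)+p).toNat o 0 := by
      simp only [upInvA, upP_zero]; rw [if_neg (by omega)]; congr 1 <;> omega
    rw [if_neg h]; unfold wp; rw [hinv]; simp only []
    by_cases h2 : b < ((c:ℤ)+p).toNat
    · rw [if_pos h2, if_pos ⟨hasUpperG_gB_zero b, by rw [minUpperG_gB_zero]; omega⟩,
        minUpperG_gB_zero]
    · rw [if_neg h2, if_neg (by rintro ⟨_, hlt⟩; rw [minUpperG_gB_zero] at hlt; omega)]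

lemma wpP_lower1 (b : ℕ) (p : ℤ) (o : Ineq) (c : ℕ) :
    wp (.lower c o 1) (gB b) (upP p) =
      if 0 < c then .lower 0 .le 1 else .lower c o 1 := by
  have hinv : upInvA (upP p) (.lower c o 1) = .lower c o 1 := by
    simp only [upInvA, upP_one]; rw [if_neg (by omega)]; congr 1 <;> omega
  unfold wp; rw [hinv]; simp only []
  by_cases h : 0 < c
  · rw [if_pos h, if_pos ⟨hasUpperG_gB_one b, by rw [minUpperG_gB_one]; omega⟩,
      minUpperG_gB_one]
  · rw [if_neg h, if_neg (by rintro ⟨_, hlt⟩; rw [minUpperG_gB_one] at hlt; omega)]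

lemma wpP_dUpper01_ok (b : ℕ) (p : ℤ) (o : Ineq) (c : ℕ)
    (h0 : 0 ≤ (c:ℤ) + p) (h1 : ((c:ℤ)+p).toNat ≤ b) :
    wp (.dUpper 0 1 o c) (gB b) (upP p) = .dUpper 0 1 o ((c:ℤ)+p).toNat := by
  have hinv : upInvA (upP p) (.dUpper 0 1 o c) = .dUpper 0 1 o ((c:ℤ)+p).toNat := by
    simp only [upInvA, upP_zero, upP_one]
    rw [if_neg (by omega)]; congr 1 <;> omega
  unfold wp; rw [hinv]; simp only []
  rw [if_neg (by rw [case3G_gB_01]; omega)]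

lemma wpP_dUpper01_neg (b : ℕ) (p : ℤ) (o : Ineq) (c : ℕ) (h : (c:ℤ) + p < 0) :
    wp (.dUpper 0 1 o c) (gB b) (upP p) = .tt := by
  have hinv : upInvA (upP p) (.dUpper 0 1 o c) = .dLower (-((c:ℤ)+p)).toNat o 1 0 := by
    simp only [upInvA, upP_zero, upP_one]
    rw [if_pos (by omega)]; congr 1 <;> omega
  unfold wp; rw [hinv]; simp only []
  rw [if_pos (by rw [case3G_gB_10]; omega)]

lemma wpP_dUpper01_hi (b : ℕ) (p : ℤ) (o : Ineq) (c : ℕ)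
    (h0 : 0 ≤ (c:ℤ) + p) (h1 : (b:ℤ) < (c:ℤ) + p) :
    wp (.dUpper 0 1 o c) (gB b) (upP p) = .tt := by
  have hinv : upInvA (upP p) (.dUpper 0 1 o c) = .dUpper 0 1 o ((c:ℤ)+p).toNat := by
    simp only [upInvA, upP_zero, upP_one]
    rw [if_neg (by omega)]; congr 1 <;> omega
  unfold wp; rw [hinv]; simp only []
  rw [if_pos (by rw [case3G_gB_01]; omega)]

/- wp for the initial transition's guard with the identity update. -/
lemma wp_initGuard_lower (x : Clk) :
    wp (.lower 0 .le x) [AC.dUpper 0 1 .le 0] idUp = .lower 0 .le x := by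
  unfold wp; rw [upInvA_idUp]; simp only []
  rw [if_neg (by rintro ⟨⟨o, c, h⟩, _⟩; simp at h)]

end WpLemmas

section Trans

variable {L : Type}

/-- The UTA transition corresponding to a counter transition. -/
def tEdge (B : BCA L) (d : L × ℤ × L) : UTrans (L ⊕ Bool) Clk :=
  { src := Sum.inl d.2.2, guard := gB B.bound, update := upP d.2.1, tgt := Sum.inl d.1 }

def tInit (B : BCA L) : UTrans (L ⊕ Bool) Clk :=
  { src := Sum.inl B.init, guard := [AC.dUpper 0 1 .le 0], update := idUp, tgt := Sum.inr false }

def tAcc (lt : L) : UTrans (L ⊕ Bool) Clk :=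
  { src := Sum.inr true, guard := [], update := idUp, tgt := Sum.inl lt }

def tLoop : UTrans (L ⊕ Bool) Clk :=
  { src := Sum.inr true, guard := [], update := upT, tgt := Sum.inr true }

lemma mem_tEdge (B : BCA L) (lt : L) {d} (hd : d ∈ B.trans) :
    tEdge B d ∈ (mkAB B lt).trans := by
  apply List.mem_append_left
  exact List.mem_map.2 ⟨d, hd, rfl⟩

lemma mem_tInit (B : BCA L) (lt : L) : tInit B ∈ (mkAB B lt).trans := by
  apply List.mem_append_right; simp [tInit]

lemma mem_tAcc (B : BCA L) (lt : L) : tAcc lt ∈ (mkAB B lt).trans := by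
  apply List.mem_append_right; simp [tAcc]

lemma mem_tLoop (B : BCA L) (lt : L) : tLoop ∈ (mkAB B lt).trans := by
  apply List.mem_append_right
  have : tLoop (L := L) =
      { src := Sum.inr true, guard := [],
        update := fun z => if z = (1 : Fin 2) then Rhs.clock 1 1 else Rhs.clock z 0,
        tgt := Sum.inr true } := rfl
  rw [this]; simp

end Trans

section Forward

variable {L : Type}

lemma run_prop (B : BCA L) (lt : L) (G : (L ⊕ Bool) → Set (AC Clk))
    (hG : IsRedGMap (mkAB B lt) G) {n : ℕ} {ls : ℕ → L} {cs : ℕ → ℤ}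
    (hrun : B.IsRun n ls cs) :
    ∀ i ≤ n, AC.dUpper 0 1 .le (cs i).toNat ∈ G (Sum.inl (ls i)) := by
  obtain ⟨h0, hc0, hbd, hstep⟩ := hrun
  intro i
  induction i with
  | zero =>
      intro _
      have h := (hG (tInit B) (mem_tInit B lt)).1 (AC.dUpper 0 1 .le 0) (by simp [tInit])
      simpa [tInit, h0, hc0] using h
  | succ i ih =>
      intro hin
      obtain ⟨p, hpmem, hcs⟩ := hstep i (by omega)
      have hmem := ih (by omega)
      have h3 := (hG (tEdge B (ls i, p, ls (i+1))) (mem_tEdge B lt hpmem)).2.2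
        _ hmem
      have h0i : (0:ℤ) ≤ ((cs i).toNat : ℤ) + p := by
        have := (hbd i (by omega)).1
        have := (hbd (i+1) (by omega)).1
        omega
      have h1i : (((cs i).toNat : ℤ) + p).toNat ≤ B.bound := by
        have := (hbd i (by omega)).1
        have := (hbd (i+1) (by omega)).2
        omega
      rw [show (tEdge B (ls i, p, ls (i+1))).guard = gB B.bound from rfl,
        show (tEdge B (ls i, p, ls (i+1))).update = upP p from rfl,
        wpP_dUpper01_ok B.bound p .le (cs i).toNat h0i h1i] at h3
      have : (((cs i).toNat : ℤ) + p).toNat = (cs (i+1)).toNat := by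
        have := (hbd i (by omega)).1
        omega
      rw [this] at h3
      exact h3

lemma loop_prop (B : BCA L) (lt : L) (G : (L ⊕ Bool) → Set (AC Clk))
    (hG : IsRedGMap (mkAB B lt) G) (c : ℕ)
    (hc : AC.dUpper 0 1 .le c ∈ G (Sum.inl lt)) :
    ∀ m : ℕ, AC.dUpper 0 1 .le (c + m) ∈ G (Sum.inr true) := by
  have hbase : AC.dUpper 0 1 .le c ∈ G (Sum.inr true) := by
    have h := (hG (tAcc lt) (mem_tAcc B lt)).2.2 (AC.dUpper 0 1 .le c) hc
    rwa [show (tAcc (L := L) lt).guard = [] from rfl,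
      show (tAcc (L := L) lt).update = idUp from rfl, wp_nil_idUp] at h
  intro m
  induction m with
  | zero => simpa using hbase
  | succ m ih =>
      have h := (hG tLoop (mem_tLoop B lt)).2.2 (AC.dUpper 0 1 .le (c + m)) ih
      rwa [show (tLoop (L := L)).guard = [] from rfl,
        show (tLoop (L := L)).update = upT from rfl, wp_upT_dUpper01,
        show c + m + 1 = c + (m+1) from rfl] at h

lemma forward_dir (B : BCA L) (lt : L)
    (h : ∃ (n : ℕ) (ls : ℕ → L) (cs : ℕ → ℤ), B.IsRun n ls cs ∧ ls n = lt) :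
    ¬ (minRedGMap (mkAB B lt) (Sum.inr true)).Finite := by
  obtain ⟨n, ls, cs, hrun, hend⟩ := h
  have key : ∀ m : ℕ, AC.dUpper 0 1 .le ((cs n).toNat + m) ∈
      minRedGMap (mkAB B lt) (Sum.inr true) := by
    intro m
    simp only [minRedGMap, Set.mem_iInter, Set.mem_setOf_eq]
    intro G hG
    have h1 := run_prop B lt G hG hrun n le_rfl
    rw [hend] at h1
    exact loop_prop B lt G hG _ h1 m
  intro hfin
  exact (Set.infinite_of_injective_forall_mem
      (f := fun m : ℕ => AC.dUpper (0:Clk) 1 .le ((cs n).toNat + m))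
      (fun a b hab => by simpa [AC.dUpper.injEq] using hab) key) hfin

end Forward

section Backward

variable {L : Type}

/-- Counter values reachable at a state of the BCA. -/
def RSet (B : BCA L) (ℓ : L) : Set ℕ :=
  {c | ∃ n ls cs, B.IsRun n ls cs ∧ ls n = ℓ ∧ cs n = (c : ℤ)}

def baseList (b : ℕ) : List (AC Clk) :=
  .tt :: .ff :: (List.range (b+1)).flatMap (fun c =>
    [.upper 0 .lt c, .upper 0 .le c, .upper 1 .lt c, .upper 1 .le c,
     .lower c .lt 0, .lower c .le 0, .lower c .lt 1, .lower c .le 1])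

def Sbase (b : ℕ) : Set (AC Clk) := {φ | φ ∈ baseList b}

lemma clk_cases (x : Clk) : x = 0 ∨ x = 1 := by
  fin_cases x
  · exact Or.inl rfl
  · exact Or.inr rfl

lemma mem_Sbase {b : ℕ} {φ : AC Clk} :
    φ ∈ Sbase b ↔ φ = .tt ∨ φ = .ff ∨
      ∃ x o c, c ≤ b ∧ (φ = .upper x o c ∨ φ = .lower c o x) := by
  simp only [Sbase, Set.mem_setOf_eq, baseList, List.mem_cons, List.mem_flatMap,
    List.mem_range, Nat.lt_succ_iff]
  constructor
  · rintro (rfl | rfl | ⟨c, hc, hm⟩)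
    · exact Or.inl rfl
    · exact Or.inr (Or.inl rfl)
    · right; right
      simp only [List.mem_cons, List.not_mem_nil, or_false] at hm
      rcases hm with rfl | rfl | rfl | rfl | rfl | rfl | rfl | rfl
      all_goals first
        | exact ⟨_, _, c, hc, Or.inl rfl⟩
        | exact ⟨_, _, c, hc, Or.inr rfl⟩
  · rintro (rfl | rfl | ⟨x, o, c, hc, (rfl | rfl)⟩)
    · exact Or.inl rfl
    · exact Or.inr (Or.inl rfl)
    · exact Or.inr (Or.inr ⟨c, hc, by fin_cases x <;> cases o <;> simp⟩)
    · exact Or.inr (Or.inr ⟨c, hc, by fin_cases x <;> cases o <;> simp⟩)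

lemma Sbase_finite (b : ℕ) : (Sbase b).Finite := (baseList b).finite_toSet

lemma RSet_subset (B : BCA L) (ℓ : L) : RSet B ℓ ⊆ Set.Iic B.bound := by
  rintro c ⟨n, ls, cs, ⟨_, _, hbd, _⟩, _, hcn⟩
  have := (hbd n le_rfl).2
  simp only [Set.mem_Iic]; omega

lemma RSet_finite (B : BCA L) (ℓ : L) : (RSet B ℓ).Finite :=
  (Set.finite_Iic B.bound).subset (RSet_subset B ℓ)

lemma RSet_init (B : BCA L) : 0 ∈ RSet B B.init :=
  ⟨0, fun _ => B.init, fun _ => 0, ⟨rfl, rfl, fun i _ => by simp, fun i hi => by omega⟩,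
    rfl, rfl⟩

lemma RSet_step (B : BCA L) {ℓ ℓ' : L} {p : ℤ} {c : ℕ}
    (hc : c ∈ RSet B ℓ) (hd : (ℓ, p, ℓ') ∈ B.trans)
    (h0 : 0 ≤ (c:ℤ) + p) (h1 : ((c:ℤ) + p).toNat ≤ B.bound) :
    ((c:ℤ) + p).toNat ∈ RSet B ℓ' := by
  obtain ⟨n, ls, cs, ⟨hl0, hc0, hbd, hstep⟩, hln, hcn⟩ := hc
  refine ⟨n+1, fun i => if i ≤ n then ls i else ℓ', fun i => if i ≤ n then cs i else (c:ℤ) + p,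
    ⟨by simp [hl0], by simp [hc0], ?_, ?_⟩, by simp, by simp; omega⟩
  · intro i hi
    by_cases h : i ≤ n
    · simpa [h] using hbd i h
    · simp only []
      rw [if_neg h]
      exact ⟨by omega, by omega⟩
  · intro i hi
    by_cases h : i < n
    · obtain ⟨q, hq1, hq2⟩ := hstep i h
      exact ⟨q, by simpa [show i ≤ n by omega, show i + 1 ≤ n by omega] using hq1,
        by simpa [show i ≤ n by omega, show i + 1 ≤ n by omega] using hq2⟩
    · have hieq : i = n := by omega
      subst hieq
      exact ⟨p, by simpa [hln] using hd, by simp [hcn]⟩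

lemma RSet_lt_empty (B : BCA L) (lt : L)
    (h : ¬ ∃ (n : ℕ) (ls : ℕ → L) (cs : ℕ → ℤ), B.IsRun n ls cs ∧ ls n = lt) :
    RSet B lt = ∅ := by
  ext c
  simp only [Set.mem_empty_iff_false, iff_false]
  rintro ⟨n, ls, cs, hrun, hln, _⟩
  exact h ⟨n, ls, cs, hrun, hln⟩

/-- The explicit finite reduced G-map witnessing non-reachability. -/
def G0 (B : BCA L) : (L ⊕ Bool) → Set (AC Clk)
  | Sum.inl ℓ => Sbase B.bound ∪ (fun c => AC.dUpper 0 1 .le c) '' RSet B ℓ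
  | Sum.inr false => ∅
  | Sum.inr true => Sbase B.bound

lemma G0_finite (B : BCA L) (q : L ⊕ Bool) : (G0 B q).Finite := by
  rcases q with ℓ | b
  · exact (Sbase_finite B.bound).union ((RSet_finite B ℓ).image _)
  · cases b
    · exact Set.finite_empty
    · exact Sbase_finite B.bound

lemma Sbase_mem_tt (b : ℕ) : AC.tt ∈ Sbase b := mem_Sbase.2 (Or.inl rfl)
lemma Sbase_mem_ff (b : ℕ) : AC.ff ∈ Sbase b := mem_Sbase.2 (Or.inr (Or.inl rfl))
lemma Sbase_mem_upper {b c : ℕ} (x : Clk) (o : Ineq) (hc : c ≤ b) :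
    AC.upper x o c ∈ Sbase b := mem_Sbase.2 (Or.inr (Or.inr ⟨x, o, c, hc, Or.inl rfl⟩))
lemma Sbase_mem_lower {b c : ℕ} (x : Clk) (o : Ineq) (hc : c ≤ b) :
    AC.lower c o x ∈ Sbase b := mem_Sbase.2 (Or.inr (Or.inr ⟨x, o, c, hc, Or.inr rfl⟩))

/-- `Sbase` is closed under `wp` along counter transitions. -/
lemma Sbase_closed_edge (b : ℕ) (p : ℤ) {φ : AC Clk} (hφ : φ ∈ Sbase b) :
    wp φ (gB b) (upP p) ∈ Sbase b := by
  rcases mem_Sbase.1 hφ with rfl | rfl | ⟨x, o, c, hc, (rfl | rfl)⟩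
  · rw [wp_tt]; exact Sbase_mem_tt b
  · rw [wp_ff]; exact Sbase_mem_ff b
  · rcases clk_cases x with rfl | rfl
    · rw [wpP_upper0]
      split_ifs
      · exact Sbase_mem_ff b
      · exact Sbase_mem_tt b
    · rw [wpP_upper1]; exact Sbase_mem_tt b
  · rcases clk_cases x with rfl | rfl
    · rw [wpP_lower0]
      split_ifs with h1 h2
      · exact Sbase_mem_tt b
      · exact Sbase_mem_lower _ _ le_rfl
      · exact Sbase_mem_lower _ _ (by omega)
    · rw [wpP_lower1]
      split_ifs
      · exact Sbase_mem_lower _ _ (by omega)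
      · exact Sbase_mem_lower _ _ hc

/-- `Sbase` is closed under `wp` along the self-loop. -/
lemma Sbase_closed_loop (b : ℕ) {φ : AC Clk} (hφ : φ ∈ Sbase b) :
    wp φ [] upT ∈ Sbase b := by
  rw [wp_nil]
  rcases mem_Sbase.1 hφ with rfl | rfl | ⟨x, o, c, hc, (rfl | rfl)⟩
  · rw [upInvA_tt]; exact Sbase_mem_tt b
  · rw [upInvA_ff]; exact Sbase_mem_ff b
  · rcases clk_cases x with rfl | rfl
    · rw [upInvA_upT_upper0]; exact Sbase_mem_upper _ _ hc
    · rw [upInvA_upT_upper1]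
      split_ifs
      · exact Sbase_mem_ff b
      · exact Sbase_mem_upper _ _ (by omega)
  · rcases clk_cases x with rfl | rfl
    · rw [upInvA_upT_lower0]; exact Sbase_mem_lower _ _ hc
    · rw [upInvA_upT_lower1]
      split_ifs
      · exact Sbase_mem_tt b
      · exact Sbase_mem_lower _ _ (by omega)

lemma G0_isRedGMap (B : BCA L) (lt : L)
    (hreach : ¬ ∃ (n : ℕ) (ls : ℕ → L) (cs : ℕ → ℤ), B.IsRun n ls cs ∧ ls n = lt) :
    IsRedGMap (mkAB B lt) (G0 B) := by
  intro t ht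
  rcases List.mem_append.1 ht with hmap | hrest
  · -- counter transitions
    obtain ⟨d, hd, rfl⟩ := List.mem_map.1 hmap
    refine ⟨?_, ?_, ?_⟩
    · intro φ hφ
      simp only [List.mem_cons, List.not_mem_nil, or_false] at hφ
      rcases hφ with rfl | rfl
      · exact Or.inl (Sbase_mem_upper 0 .le le_rfl)
      · exact Or.inl (Sbase_mem_upper 1 .le (Nat.zero_le _))
    · intro x
      show wp (AC.lower 0 .le x) (gB B.bound) (upP d.2.1) ∈ G0 B (Sum.inl d.2.2)
      rcases clk_cases x with rfl | rfl
      · rw [wpP_lower0]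
        split_ifs with h1 h2
        · exact Or.inl (Sbase_mem_tt B.bound)
        · exact Or.inl (Sbase_mem_lower _ _ le_rfl)
        · exact Or.inl (Sbase_mem_lower _ _ (by omega))
      · rw [wpP_lower1]
        rw [if_neg (by omega)]
        exact Or.inl (Sbase_mem_lower _ _ (Nat.zero_le _))
    · intro φ hφ
      show wp φ (gB B.bound) (upP d.2.1) ∈ G0 B (Sum.inl d.2.2)
      rcases hφ with hS | ⟨c, hc, rfl⟩
      · exact Or.inl (Sbase_closed_edge B.bound d.2.1 hS)
      · by_cases h1 : (c:ℤ) + d.2.1 < 0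
        · rw [wpP_dUpper01_neg _ _ _ _ h1]; exact Or.inl (Sbase_mem_tt B.bound)
        · by_cases h2 : (B.bound : ℤ) < (c:ℤ) + d.2.1
          · rw [wpP_dUpper01_hi _ _ _ _ (by omega) h2]; exact Or.inl (Sbase_mem_tt B.bound)
          · rw [wpP_dUpper01_ok _ _ _ _ (by omega) (by omega)]
            refine Or.inr ⟨_, RSet_step B hc ?_ (by omega) (by omega), rfl⟩
            simpa using hd
  · simp only [List.mem_cons, List.not_mem_nil, or_false] at hrest
    rcases hrest with rfl | rfl | rfl
    · -- initial transition
      refine ⟨?_, ?_, ?_⟩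
      · intro φ hφ
        simp only [List.mem_singleton] at hφ
        subst hφ
        exact Or.inr ⟨0, RSet_init B, rfl⟩
      · intro x
        show wp (AC.lower 0 .le x) [AC.dUpper 0 1 .le 0] idUp ∈ G0 B (Sum.inl B.init)
        rw [wp_initGuard_lower]
        exact Or.inl (Sbase_mem_lower _ _ (Nat.zero_le _))
      · intro φ hφ
        simp only [G0, Set.mem_empty_iff_false] at hφ
    · -- the transition ℓ_t' → ℓ_t
      refine ⟨?_, ?_, ?_⟩
      · intro φ hφ; simp at hφ
      · intro x
        show wp (AC.lower 0 .le x) [] idUp ∈ G0 B (Sum.inr true)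
        rw [wp_nil_idUp]
        exact Sbase_mem_lower _ _ (Nat.zero_le _)
      · intro φ hφ
        show wp φ [] idUp ∈ G0 B (Sum.inr true)
        rw [wp_nil_idUp]
        rcases hφ with hS | ⟨c, hc, rfl⟩
        · exact hS
        · rw [RSet_lt_empty B lt hreach] at hc
          exact absurd hc (Set.notMem_empty c)
    · -- the self-loop on ℓ_t'
      refine ⟨?_, ?_, ?_⟩
      · intro φ hφ; simp at hφ
      · intro x
        show wp (AC.lower 0 .le x) [] upT ∈ G0 B (Sum.inr true)
        exact Sbase_closed_loop B.bound (Sbase_mem_lower _ _ (Nat.zero_le _))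
      · intro φ hφ
        show wp φ [] upT ∈ G0 B (Sum.inr true)
        exact Sbase_closed_loop B.bound hφ

lemma backward_dir (B : BCA L) (lt : L)
    (hreach : ¬ ∃ (n : ℕ) (ls : ℕ → L) (cs : ℕ → ℤ), B.IsRun n ls cs ∧ ls n = lt) :
    ∀ q, (minRedGMap (mkAB B lt) q).Finite := by
  intro q
  apply (G0_finite B q).subset
  intro φ hφ
  simp only [minRedGMap, Set.mem_iInter, Set.mem_setOf_eq] at hφ
  exact hφ (G0 B) (G0_isRedGMap B lt hreach)

end Backward

/-- Proposition `diagonal-pspace-hard`. The target state `ℓ_t`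
is reachable in `B` iff the smallest reduced G-map of `A_B` assigns an infinite
set to some state. -/
theorem stmt19 {L : Type} [Fintype L] (B : BCA L) (lt : L) :
    (∃ (n : ℕ) (ls : ℕ → L) (cs : ℕ → ℤ), B.IsRun n ls cs ∧ ls n = lt) ↔
    (∃ q, ¬ (minRedGMap (mkAB B lt) q).Finite) := by
  constructor
  · intro h
    exact ⟨Sum.inr true, forward_dir B lt h⟩
  · intro h
    by_contra hreach
    obtain ⟨q, hq⟩ := h
    exact hq (backward_dir B lt hreach q)
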